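/- arXiv:2004.08001 — 4 statements merged into one kernel-verified Lean document; each statement's English description precedes it below -/
import Mathlib

section
/- Let q be a prime power, let f_1, …, f_k ∈ F_q[x] be nonzero polynomials, let d_1, …, d_k be positive integers, and let b be an element of the algebraic closure of F_q. Let ℓ be any positive integer divisible by each of d_1, …, d_k, set G_ℓ(x) = gcd(x^ℓ − 1, f_1(x)(x^ℓ − 1)/(x^{d_1} − 1), …, f_k(x)(x^ℓ − 1)/(x^{d_k} − 1)) and H_ℓ(x) = (x^ℓ − 1)/G_ℓ(x). Then the equation L_{f_1}(x_1) + ⋯ + L_{f_k}(x_k) = b has a solution (z_1, …, z_k) with z_i ∈ F_{q^{d_i}} for each i if and only if L_{H_ℓ}(b) = 0. -/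
open Polynomial

/-- The `q`-associate of a polynomial `f = ∑ aᵢ xⁱ` over the finite field `F` (with
`q = Fintype.card F` elements), evaluated at `α` in the algebraic closure:
`L_f(α) = ∑ aᵢ α^(qⁱ)`. -/
noncomputable def qAssoc (F : Type*) [Field F] [Fintype F] (f : Polynomial F)
    (α : AlgebraicClosure F) : AlgebraicClosure F :=
  ∑ i ∈ f.support, algebraMap F (AlgebraicClosure F) (f.coeff i) * α ^ (Fintype.card F) ^ i

section Aux

variable (F : Type*) [Field F] [Fintype F]

/-- The Frobenius `x ↦ x ^ q` as an `F`-linear endomorphism of the algebraic closure. -/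
noncomputable def frobL : Module.End F (AlgebraicClosure F) where
  toFun x := x ^ Fintype.card F
  map_add' x y := by
    obtain ⟨n, hp, hc⟩ := FiniteField.card F (ringChar F)
    haveI := Fact.mk hp
    haveI : CharP (AlgebraicClosure F) (ringChar F) :=
      charP_of_injective_algebraMap (algebraMap F (AlgebraicClosure F)).injective _
    simp only [hc]
    exact add_pow_char_pow x y (ringChar F) (n : ℕ)
  map_smul' a x := by
    simp only [RingHom.id_apply, Algebra.smul_def, mul_pow, ← map_pow, FiniteField.pow_card]

@[simp] lemma frobL_apply (x : AlgebraicClosure F) : frobL F x = x ^ Fintype.card F := rfl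

lemma frobL_pow (n : ℕ) : ∀ x : AlgebraicClosure F,
    ((frobL F) ^ n) x = x ^ (Fintype.card F) ^ n := by
  induction n with
  | zero => intro x; simp
  | succ n ih =>
    intro x
    rw [pow_succ, Module.End.mul_apply, ih, frobL_apply, ← pow_mul, ← pow_succ']

/-- The linearized (`q`-associate) action of a polynomial. -/
noncomputable def lmap (g : Polynomial F) : Module.End F (AlgebraicClosure F) :=
  aeval (frobL F) g

lemma lmap_apply (g : Polynomial F) (x : AlgebraicClosure F) :
    lmap F g x = ∑ i ∈ g.support,
      algebraMap F (AlgebraicClosure F) (g.coeff i) * x ^ (Fintype.card F) ^ i := by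
  rw [lmap, aeval_def, eval₂_eq_sum, Polynomial.sum_def, LinearMap.sum_apply]
  simp only [Module.End.mul_apply, Module.algebraMap_end_apply, frobL_pow, Algebra.smul_def]

lemma qAssoc_eq (g : Polynomial F) (x : AlgebraicClosure F) :
    qAssoc F g x = lmap F g x := by
  rw [qAssoc, lmap_apply]

lemma lmap_mul (a b : Polynomial F) (x : AlgebraicClosure F) :
    lmap F (a * b) x = lmap F a (lmap F b x) := by
  rw [lmap, lmap, lmap, map_mul, Module.End.mul_apply]

lemma lmap_X_pow_sub_one (n : ℕ) (x : AlgebraicClosure F) :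
    lmap F (X ^ n - 1) x = x ^ (Fintype.card F) ^ n - x := by
  rw [lmap, map_sub, map_one, map_pow, aeval_X, LinearMap.sub_apply, Module.End.one_apply,
    frobL_pow]

/-- Counting the kernel of `lmap F g` when the constant coefficient is nonzero. -/
lemma lmap_ker_card (g : Polynomial F) (hg : g.coeff 0 ≠ 0) :
    ((LinearMap.ker (lmap F g) : Set (AlgebraicClosure F))).Finite ∧
      (LinearMap.ker (lmap F g) : Set (AlgebraicClosure F)).ncard
        = Fintype.card F ^ g.natDegree := by
  classical
  have hgne : g ≠ 0 := fun h => hg (by simp [h])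
  have hq2 : 2 ≤ Fintype.card F := Fintype.one_lt_card
  set m := g.natDegree with hm
  set P : Polynomial (AlgebraicClosure F) :=
    ∑ i ∈ g.support, C (algebraMap F (AlgebraicClosure F) (g.coeff i)) *
      X ^ (Fintype.card F) ^ i with hP
  have heval : ∀ x, P.eval x = lmap F g x := by
    intro x
    rw [lmap_apply, hP, eval_finset_sum]
    simp
  have htop : P.coeff ((Fintype.card F) ^ m) = algebraMap F (AlgebraicClosure F) (g.coeff m) := by
    rw [hP, finset_sum_coeff, Finset.sum_eq_single m]
    · simp [coeff_C_mul, coeff_X_pow]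
    · intro i hi hne
      have hne' : (Fintype.card F) ^ m ≠ (Fintype.card F) ^ i :=
        fun h => hne (Nat.pow_right_injective hq2 h.symm)
      simp [coeff_C_mul, coeff_X_pow, hne']
    · intro h
      exact absurd (natDegree_mem_support_of_nonzero hgne) h
  have htopne : P.coeff ((Fintype.card F) ^ m) ≠ 0 := by
    rw [htop]
    exact fun h => (leadingCoeff_ne_zero.mpr hgne) ((_root_.map_eq_zero _).mp h)
  have hPne : P ≠ 0 := fun h => htopne (by simp [h])
  have hdeg : P.natDegree = (Fintype.card F) ^ m := by
    refine le_antisymm ?_ (le_natDegree_of_ne_zero htopne)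
    rw [natDegree_le_iff_coeff_eq_zero]
    intro j hj
    rw [hP, finset_sum_coeff]
    apply Finset.sum_eq_zero
    intro i hi
    have hle : (Fintype.card F) ^ i ≤ (Fintype.card F) ^ m :=
      Nat.pow_le_pow_right (by omega) (le_natDegree_of_mem_supp i hi)
    have : j ≠ (Fintype.card F) ^ i := by omega
    simp [coeff_C_mul, coeff_X_pow, this]
  have hderiv : derivative P = C (algebraMap F (AlgebraicClosure F) (g.coeff 0)) := by
    obtain ⟨n, hp, hc⟩ := FiniteField.card F (ringChar F)
    haveI := Fact.mk hp
    haveI : CharP (AlgebraicClosure F) (ringChar F) :=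
      charP_of_injective_algebraMap (algebraMap F (AlgebraicClosure F)).injective _
    rw [hP, derivative_sum, Finset.sum_eq_single 0]
    · simp [derivative_C_mul_X_pow]
    · intro i hi hine
      rw [derivative_C_mul_X_pow]
      have hcast : ((Fintype.card F ^ i : ℕ) : AlgebraicClosure F) = 0 := by
        rw [CharP.cast_eq_zero_iff (AlgebraicClosure F) (ringChar F)]
        exact dvd_trans (hc ▸ dvd_pow_self (ringChar F) n.pos.ne')
          (dvd_pow_self (Fintype.card F) hine)
      rw [Nat.cast_pow] at hcast
      rw [Nat.cast_pow, hcast]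
      simp
    · intro h
      exact absurd (mem_support_iff.mpr hg) h
  have ha0 : algebraMap F (AlgebraicClosure F) (g.coeff 0) ≠ 0 :=
    fun h => hg ((_root_.map_eq_zero _).mp h)
  have hsep : P.Separable := by
    rw [Polynomial.separable_def, hderiv]
    exact ⟨0, C (algebraMap F (AlgebraicClosure F) (g.coeff 0))⁻¹,
      by rw [zero_mul, zero_add, ← C_mul, inv_mul_cancel₀ ha0, C_1]⟩
  have hroots : Multiset.card P.roots = (Fintype.card F) ^ m := by
    rw [← hdeg]
    exact splits_iff_card_roots.mp (IsAlgClosed.splits P)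
  have hset : (LinearMap.ker (lmap F g) : Set (AlgebraicClosure F)) = ↑P.roots.toFinset := by
    ext x
    simp only [SetLike.mem_coe, LinearMap.mem_ker, Finset.mem_coe, Multiset.mem_toFinset,
      mem_roots', IsRoot.def, heval]
    exact ⟨fun h => ⟨hPne, h⟩, fun h => h.2⟩
  constructor
  · rw [hset]; exact P.roots.toFinset.finite_toSet
  · rw [hset, Set.ncard_coe_finset,
      Multiset.toFinset_card_eq_card_iff_nodup.mpr (nodup_roots hsep), hroots]

/-- The sum-of-images linear map. -/
noncomputable def sumMap {k : ℕ} (f : Fin k → Polynomial F)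
    (N : Fin k → Submodule F (AlgebraicClosure F)) :
    (∀ i, ↥(N i)) →ₗ[F] AlgebraicClosure F where
  toFun z := ∑ i, lmap F (f i) (z i)
  map_add' x y := by
    simp [Finset.sum_add_distrib]
  map_smul' a x := by
    simp [Finset.smul_sum]

end Aux

/-- **Theorem 1 (existence part).** For nonzero `f₁, …, f_k ∈ F_q[x]`, positive integers
`d₁, …, d_k`, `b` in the algebraic closure of `F_q`, and `ℓ` divisible by each `dᵢ`, with
`G_ℓ = gcd(x^ℓ - 1, f₁(x)(x^ℓ-1)/(x^{d₁}-1), …)` and `H_ℓ = (x^ℓ-1)/G_ℓ`, the equation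
`L_{f₁}(x₁) + ⋯ + L_{f_k}(x_k) = b` has a solution with `zᵢ ∈ F_{q^{dᵢ}}` iff `L_{H_ℓ}(b) = 0`. -/
theorem linear_equation_solvable_iff
    (F : Type*) [Field F] [Fintype F] [DecidableEq F]
    (q : ℕ) (hq : q = Fintype.card F)
    {k : ℕ} (f : Fin k → Polynomial F) (hf : ∀ i, f i ≠ 0)
    (d : Fin k → ℕ) (hd : ∀ i, 0 < d i)
    (b : AlgebraicClosure F)
    (ℓ : ℕ) (hℓ : 0 < ℓ) (hdvd : ∀ i, d i ∣ ℓ)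
    (G H : Polynomial F)
    (hG : G = gcd ((X : Polynomial F) ^ ℓ - 1)
      (Finset.univ.gcd fun i => f i * ((X : Polynomial F) ^ ℓ - 1) / ((X : Polynomial F) ^ (d i) - 1)))
    (hH : H = ((X : Polynomial F) ^ ℓ - 1) / G) :
    (∃ z : Fin k → AlgebraicClosure F,
        (∀ i, z i ^ q ^ (d i) = z i) ∧ ∑ i, qAssoc F (f i) (z i) = b) ↔
      qAssoc F H b = 0 := by
  subst hq
  -- basic polynomial facts
  have hcoeff0 : ∀ n : ℕ, 0 < n → ((X : Polynomial F) ^ n - 1).coeff 0 = -1 := by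
    intro n hn
    simp [coeff_X_pow, hn.ne]
  have hne : ∀ n : ℕ, 0 < n → ((X : Polynomial F) ^ n - 1) ≠ 0 := by
    intro n hn h
    have := hcoeff0 n hn
    rw [h] at this
    simp at this
  set E : Polynomial F := X ^ ℓ - 1 with hE
  have hEne : E ≠ 0 := hne ℓ hℓ
  have hEdeg : E.natDegree = ℓ := by
    rw [hE, ← C_1, natDegree_X_pow_sub_C]
  have hei_dvd : ∀ i, ((X : Polynomial F) ^ (d i) - 1) ∣ E := by
    intro i
    obtain ⟨c, hc⟩ := hdvd i
    have : E = ((X : Polynomial F) ^ (d i)) ^ c - 1 ^ c := by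
      rw [hE, ← pow_mul, ← hc, one_pow]
    rw [this]
    exact sub_dvd_pow_sub_pow _ _ _
  set g : Fin k → Polynomial F :=
    fun i => f i * E / ((X : Polynomial F) ^ (d i) - 1) with hgdef
  have hgi : ∀ i, g i * ((X : Polynomial F) ^ (d i) - 1) = f i * E := by
    intro i
    rw [hgdef]
    rw [mul_comm]
    exact EuclideanDomain.mul_div_cancel' (hne _ (hd i)) ((hei_dvd i).mul_left (f i))
  have hGdvdE : G ∣ E := hG ▸ gcd_dvd_left _ _
  have hGdvdg : ∀ i, G ∣ g i := fun i =>
    dvd_trans (hG ▸ gcd_dvd_right _ _) (Finset.gcd_dvd (Finset.mem_univ i))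
  have hGne : G ≠ 0 := by
    intro h
    rw [h] at hGdvdE
    exact hEne (zero_dvd_iff.mp hGdvdE)
  have hGH : G * H = E := hH ▸ EuclideanDomain.mul_div_cancel' hGne hGdvdE
  have hGHc : G.coeff 0 * H.coeff 0 = -1 := by
    rw [← mul_coeff_zero, hGH]
    exact hcoeff0 ℓ hℓ
  have hHc0 : H.coeff 0 ≠ 0 := by
    intro h; rw [h, mul_zero] at hGHc; exact (by norm_num : (0 : F) ≠ -1) hGHc
  have hGc0 : G.coeff 0 ≠ 0 := by
    intro h; rw [h, zero_mul] at hGHc; exact (by norm_num : (0 : F) ≠ -1) hGHc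
  have hHne : H ≠ 0 := fun h => hHc0 (by simp [h])
  have hdegsum : G.natDegree + H.natDegree = ℓ := by
    rw [← natDegree_mul hGne hHne, hGH, hEdeg]
  -- submodules
  set M : Submodule F (AlgebraicClosure F) := LinearMap.ker (lmap F E) with hM
  set N : Fin k → Submodule F (AlgebraicClosure F) :=
    fun i => LinearMap.ker (lmap F ((X : Polynomial F) ^ (d i) - 1)) with hN
  set T := sumMap F f N with hT
  set S : Submodule F (AlgebraicClosure F) := LinearMap.range T with hS
  have hT_apply : ∀ z : ∀ i, ↥(N i), T z = ∑ i, lmap F (f i) (z i) := fun z => rfl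
  -- membership characterizations
  have hmemN : ∀ (i) (x : AlgebraicClosure F),
      x ∈ N i ↔ x ^ (Fintype.card F) ^ (d i) = x := by
    intro i x
    rw [hN, LinearMap.mem_ker, lmap_X_pow_sub_one, sub_eq_zero]
  -- Step A : S ⊆ ker (lmap F H)
  have hstepA : ∀ y ∈ S, lmap F H y = 0 := by
    rintro y ⟨z, rfl⟩
    rw [hT_apply, map_sum]
    apply Finset.sum_eq_zero
    intro i _
    obtain ⟨u, hu⟩ := hGdvdg i
    have hcancel : u * ((X : Polynomial F) ^ (d i) - 1) = f i * H := by
      apply mul_left_cancel₀ hGne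
      rw [← mul_assoc, ← hu, hgi, ← hGH]
      ring
    have : H * f i = u * ((X : Polynomial F) ^ (d i) - 1) := by rw [hcancel]; ring
    rw [← lmap_mul, this, lmap_mul]
    have hz : lmap F ((X : Polynomial F) ^ (d i) - 1) ((z i : AlgebraicClosure F)) = 0 :=
      (LinearMap.mem_ker).mp (z i).2
    rw [hz, map_zero]
  -- Step B : lmap G maps M into S
  have hstable : ∀ (c : Polynomial F), ∀ w ∈ M, lmap F c w ∈ M := by
    intro c w hw
    rw [hM, LinearMap.mem_ker, ← lmap_mul, mul_comm, lmap_mul,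
      (LinearMap.mem_ker).mp hw, map_zero]
  have hGoodMul : ∀ a : Polynomial F, (∀ w ∈ M, lmap F a w ∈ S) →
      ∀ c : Polynomial F, ∀ w ∈ M, lmap F (a * c) w ∈ S := by
    intro a ha c w hw
    rw [lmap_mul]
    exact ha _ (hstable c w hw)
  have hGoodGcd : ∀ a b' : Polynomial F, (∀ w ∈ M, lmap F a w ∈ S) →
      (∀ w ∈ M, lmap F b' w ∈ S) → ∀ w ∈ M, lmap F (gcd a b') w ∈ S := by
    intro a b' ha hb w hw
    obtain ⟨x, y, hxy⟩ := exists_gcd_eq_mul_add_mul a b'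
    rw [hxy, lmap, map_add, LinearMap.add_apply]
    exact S.add_mem (hGoodMul a ha x w hw) (hGoodMul b' hb y w hw)
  have hGoodg : ∀ i, ∀ w ∈ M, lmap F (g i) w ∈ S := by
    intro i w hw
    obtain ⟨t, ht⟩ := hei_dvd i
    have hgit : g i = f i * t := by
      apply mul_right_cancel₀ (hne _ (hd i))
      rw [hgi, ht]
      ring
    have htmem : lmap F t w ∈ N i := by
      rw [hN, LinearMap.mem_ker, ← lmap_mul, ← ht, (LinearMap.mem_ker).mp hw]
    rw [hgit, lmap_mul]
    refine ⟨Pi.single i ⟨lmap F t w, htmem⟩, ?_⟩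
    rw [hT_apply, Finset.sum_eq_single i]
    · simp
    · intro j _ hj
      simp [Pi.single_eq_of_ne hj]
    · intro h; exact absurd (Finset.mem_univ i) h
  have hGoodFinset : ∀ s : Finset (Fin k), ∀ w ∈ M, lmap F (s.gcd g) w ∈ S := by
    intro s
    induction s using Finset.induction_on with
    | empty =>
      intro w hw
      rw [Finset.gcd_empty, lmap, map_zero]
      exact S.zero_mem
    | insert a s' hni ih =>
      intro w hw
      rw [Finset.gcd_insert]
      exact hGoodGcd _ _ (hGoodg a) ih w hw
  have hGoodE : ∀ w ∈ M, lmap F E w ∈ S := by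
    intro w hw
    rw [(LinearMap.mem_ker).mp hw]
    exact S.zero_mem
  have hGoodG : ∀ w ∈ M, lmap F G w ∈ S := by
    rw [hG]
    exact hGoodGcd _ _ hGoodE (hGoodFinset Finset.univ)
  -- Step C : counting
  have hkerE := lmap_ker_card F E (by rw [hcoeff0 ℓ hℓ]; norm_num)
  have hkerG := lmap_ker_card F G hGc0
  have hkerH := lmap_ker_card F H hHc0
  have hkerGle : LinearMap.ker (lmap F G) ≤ M := by
    intro x hx
    rw [hM, LinearMap.mem_ker, ← hGH, mul_comm, lmap_mul,
      (LinearMap.mem_ker).mp hx, map_zero]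
  set ψ : ↥M →ₗ[F] AlgebraicClosure F := (lmap F G).comp M.subtype with hψ
  have hkerψ : LinearMap.ker ψ = Submodule.comap M.subtype (LinearMap.ker (lmap F G)) :=
    LinearMap.ker_comp _ _
  have hcard_kerψ : Nat.card ↥(LinearMap.ker ψ) = Fintype.card F ^ G.natDegree := by
    rw [hkerψ, Nat.card_congr (Submodule.comapSubtypeEquivOfLe hkerGle).toEquiv]
    rw [← hkerG.2, ← Nat.card_coe_set_eq]
    rfl
  have hcardM : Nat.card ↥M = Fintype.card F ^ ℓ := by
    rw [← hEdeg, ← hkerE.2, ← Nat.card_coe_set_eq]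
    rfl
  have hcard_range : Nat.card ↥(LinearMap.range ψ) = Fintype.card F ^ H.natDegree := by
    have h1 := Submodule.card_eq_card_quotient_mul_card (LinearMap.ker ψ)
    rw [hcardM, hcard_kerψ] at h1
    rw [Nat.card_congr (LinearMap.quotKerEquivRange ψ).toEquiv.symm]
    have hpos : 0 < Fintype.card F ^ G.natDegree :=
      pow_pos Fintype.card_pos _
    have h2 : Fintype.card F ^ ℓ = Fintype.card F ^ G.natDegree * Fintype.card F ^ H.natDegree := by
      rw [← pow_add, hdegsum]
    have h3 : Fintype.card F ^ G.natDegree * Fintype.card F ^ H.natDegree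
        = Fintype.card F ^ G.natDegree * Nat.card (↥M ⧸ LinearMap.ker ψ) := by
      rw [← h2, h1]
    exact (Nat.eq_of_mul_eq_mul_left hpos h3).symm
  have hrange_sub : (LinearMap.range ψ : Set (AlgebraicClosure F)) ⊆ S := by
    rintro x ⟨w, rfl⟩
    exact hGoodG w w.2
  have hS_sub : (S : Set (AlgebraicClosure F)) ⊆ (LinearMap.ker (lmap F H) : Set (AlgebraicClosure F)) := by
    intro y hy
    exact (LinearMap.mem_ker).mpr (hstepA y hy)
  have hSfin : (S : Set (AlgebraicClosure F)).Finite := hkerH.1.subset hS_sub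
  have hfinal : (S : Set (AlgebraicClosure F)) = (LinearMap.ker (lmap F H) : Set (AlgebraicClosure F)) := by
    apply Set.eq_of_subset_of_ncard_le hS_sub _ hkerH.1
    rw [hkerH.2]
    calc Fintype.card F ^ H.natDegree = Nat.card ↥(LinearMap.range ψ) := hcard_range.symm
      _ = (LinearMap.range ψ : Set (AlgebraicClosure F)).ncard := by
          rw [← Nat.card_coe_set_eq]; rfl
      _ ≤ (S : Set (AlgebraicClosure F)).ncard := Set.ncard_le_ncard hrange_sub hSfin
  -- conclusion
  have hbiff : b ∈ S ↔ lmap F H b = 0 := by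
    rw [← LinearMap.mem_ker, ← SetLike.mem_coe, ← SetLike.mem_coe, hfinal]
  rw [qAssoc_eq, ← hbiff]
  constructor
  · rintro ⟨z, hz1, hz2⟩
    refine ⟨fun i => ⟨z i, (hmemN i (z i)).mpr (hz1 i)⟩, ?_⟩
    rw [hT_apply, ← hz2]
    exact Finset.sum_congr rfl fun i _ => (qAssoc_eq F (f i) (z i)).symm
  · rintro ⟨z, rfl⟩
    refine ⟨fun i => (z i : AlgebraicClosure F), fun i => (hmemN i (z i)).mp (z i).2, ?_⟩
    rw [hT_apply]
    exact Finset.sum_congr rfl fun i _ => qAssoc_eq F (f i) (z i)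
end

section
/- Let q be a prime power, let f_1, …, f_k ∈ F_q[x] be nonzero polynomials, let d_1, …, d_k be positive integers, and let b be an element of the algebraic closure of F_q. Let ℓ be any positive integer divisible by each of d_1, …, d_k, set G_ℓ(x) = gcd(x^ℓ − 1, f_1(x)(x^ℓ − 1)/(x^{d_1} − 1), …, f_k(x)(x^ℓ − 1)/(x^{d_k} − 1)) and H_ℓ(x) = (x^ℓ − 1)/G_ℓ(x). If L_{H_ℓ}(b) = 0, then the number of tuples (z_1, …, z_k) with z_i ∈ F_{q^{d_i}} for each i and L_{f_1}(z_1) + ⋯ + L_{f_k}(z_k) = b equals q^{d_1 + ⋯ + d_k − deg H_ℓ}. -/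
open Polynomial

namespace LEC
set_option linter.unusedSectionVars false

variable {F : Type*} [Field F] [Fintype F] [DecidableEq F]

local notation "K" => AlgebraicClosure F
local notation "q" => Fintype.card F

lemma qpow_add (x y : K) (m : ℕ) : (x + y) ^ q ^ m = x ^ q ^ m + y ^ q ^ m := by
  haveI : CharP F (ringChar F) := ringChar.charP F
  obtain ⟨n, hn, hcard⟩ := FiniteField.card F (ringChar F)
  haveI : Fact (Nat.Prime (ringChar F)) := ⟨hn⟩
  haveI : CharP K (ringChar F) :=
    charP_of_injective_algebraMap (algebraMap F K).injective (ringChar F)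
  rw [hcard, ← pow_mul]
  exact add_pow_char_pow x y (ringChar F) (↑n * m)

lemma algebraMap_qpow (a : F) (m : ℕ) :
    (algebraMap F K a) ^ q ^ m = algebraMap F K a := by
  rw [← map_pow, FiniteField.pow_card_pow]

lemma qAssoc_eq_sum (f : Polynomial F) (α : K) :
    qAssoc F f α = f.sum fun i a => algebraMap F K a * α ^ q ^ i := rfl

lemma qAssoc_zero_left (α : K) : qAssoc F 0 α = 0 := by simp [qAssoc]

lemma qAssoc_add_left (u v : Polynomial F) (α : K) :
    qAssoc F (u + v) α = qAssoc F u α + qAssoc F v α := by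
  rw [qAssoc_eq_sum, qAssoc_eq_sum, qAssoc_eq_sum]
  exact Polynomial.sum_add_index u v _ (by simp) (by intro a b c; rw [map_add, add_mul])

lemma qAssoc_monomial (n : ℕ) (a : F) (α : K) :
    qAssoc F (monomial n a) α = algebraMap F K a * α ^ q ^ n := by
  rw [qAssoc_eq_sum]
  exact Polynomial.sum_monomial_index a _ (by simp)

lemma qAssoc_sum {ι : Type*} (s : Finset ι) (g : ι → Polynomial F) (α : K) :
    qAssoc F (∑ i ∈ s, g i) α = ∑ i ∈ s, qAssoc F (g i) α := by
  classical
  induction s using Finset.induction_on with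
  | empty => simp [qAssoc_zero_left]
  | insert _ _ h ih => simp [Finset.sum_insert h, qAssoc_add_left, ih]

lemma qAssoc_X_pow_mul (n : ℕ) (v : Polynomial F) (α : K) :
    qAssoc F (X ^ n * v) α = (qAssoc F v α) ^ q ^ n := by
  induction v using Polynomial.induction_on' with
  | add u w hu hw =>
      rw [mul_add, qAssoc_add_left, hu, hw, qAssoc_add_left, qpow_add]
  | monomial m b =>
      rw [X_pow_mul_monomial, qAssoc_monomial, qAssoc_monomial, mul_pow,
        algebraMap_qpow, ← pow_mul, ← pow_add]

lemma qAssoc_C_mul (a : F) (w : Polynomial F) (α : K) :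
    qAssoc F (C a * w) α = algebraMap F K a * qAssoc F w α := by
  rw [← smul_eq_C_mul, qAssoc_eq_sum, qAssoc_eq_sum,
    Polynomial.sum_smul_index _ _ _ (by simp)]
  rw [Polynomial.sum_def, Polynomial.sum_def, Finset.mul_sum]
  exact Finset.sum_congr rfl fun i _ => by rw [map_mul, mul_assoc]

lemma qAssoc_mul (u v : Polynomial F) (α : K) :
    qAssoc F (u * v) α = qAssoc F u (qAssoc F v α) := by
  induction u using Polynomial.induction_on' with
  | add u w hu hw => rw [add_mul, qAssoc_add_left, hu, hw, qAssoc_add_left]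
  | monomial n a =>
      rw [qAssoc_monomial, ← C_mul_X_pow_eq_monomial, mul_assoc, qAssoc_C_mul,
        qAssoc_X_pow_mul]

-- linearity in α
lemma qAssoc_add_right (f : Polynomial F) (α β : K) :
    qAssoc F f (α + β) = qAssoc F f α + qAssoc F f β := by
  rw [qAssoc, qAssoc, qAssoc, ← Finset.sum_add_distrib]
  exact Finset.sum_congr rfl fun i _ => by rw [qpow_add, mul_add]

lemma qAssoc_zero_right (f : Polynomial F) : qAssoc F f 0 = 0 := by
  rw [qAssoc]
  refine Finset.sum_eq_zero fun i _ => ?_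
  rw [zero_pow (pow_ne_zero _ Fintype.card_ne_zero), mul_zero]

lemma qAssoc_smul_right (f : Polynomial F) (a : F) (α : K) :
    qAssoc F f (algebraMap F K a * α) = algebraMap F K a * qAssoc F f α := by
  rw [qAssoc, qAssoc, Finset.mul_sum]
  refine Finset.sum_congr rfl fun i _ => ?_
  rw [mul_pow, algebraMap_qpow]
  ring

variable (F) in
/-- `qAssoc` as an `F`-linear map on the algebraic closure. -/
noncomputable def Lmap (g : Polynomial F) : K →ₗ[F] K where
  toFun := qAssoc F g
  map_add' := qAssoc_add_right g
  map_smul' a x := by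
    simp only [Algebra.smul_def, RingHom.id_apply]
    exact qAssoc_smul_right g a x

variable (F) in
/-- Kernel of the linearized polynomial. -/
noncomputable def W (g : Polynomial F) : Submodule F K := LinearMap.ker (Lmap F g)

lemma mem_W {g : Polynomial F} {z : K} : z ∈ W F g ↔ qAssoc F g z = 0 := Iff.rfl

lemma qAssoc_one (α : K) : qAssoc F 1 α = α := by
  have : (1 : Polynomial F) = monomial 0 1 := by simp [Polynomial.monomial_zero_one]
  rw [this, qAssoc_monomial]; simp

lemma W_one : W F 1 = ⊥ := by
  ext z; simp [mem_W, qAssoc_one, Submodule.mem_bot]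

lemma W_dvd {u v : Polynomial F} (h : u ∣ v) : W F u ≤ W F v := by
  obtain ⟨w, rfl⟩ := h
  intro z hz
  rw [mem_W] at hz ⊢
  rw [mul_comm, qAssoc_mul, hz, qAssoc_zero_right]

lemma W_eq_of_associated {u v : Polynomial F} (h : Associated u v) : W F u = W F v := by
  obtain ⟨c, rfl⟩ := h
  obtain ⟨r, hr, hC⟩ := Polynomial.isUnit_iff.mp c.isUnit
  ext z
  rw [mem_W, mem_W, mul_comm, ← hC, qAssoc_C_mul]
  have : algebraMap F K r ≠ 0 := by
    simpa using (map_ne_zero_iff _ (algebraMap F K).injective).mpr hr.ne_zero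
  simp [this]

lemma W_gcd (u v : Polynomial F) : W F (gcd u v) = W F u ⊓ W F v := by
  classical
  refine le_antisymm (le_inf (W_dvd (gcd_dvd_left u v)) (W_dvd (gcd_dvd_right u v))) ?_
  have hassoc : Associated (EuclideanDomain.gcd u v) (gcd u v) :=
    associated_of_dvd_dvd (dvd_gcd (EuclideanDomain.gcd_dvd_left u v)
        (EuclideanDomain.gcd_dvd_right u v))
      (EuclideanDomain.dvd_gcd (gcd_dvd_left u v) (gcd_dvd_right u v))
  rw [← W_eq_of_associated hassoc]
  intro z hz
  obtain ⟨hu, hv⟩ := hz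
  rw [SetLike.mem_coe] at hu hv
  rw [mem_W] at hu hv ⊢
  rw [EuclideanDomain.gcd_eq_gcd_ab u v, qAssoc_add_left, mul_comm u, mul_comm v,
    qAssoc_mul, qAssoc_mul, hu, hv, qAssoc_zero_right, qAssoc_zero_right, add_zero]

variable (F) in
/-- The linearized polynomial as an honest polynomial over the algebraic closure. -/
noncomputable def qP (g : Polynomial F) : Polynomial K :=
  ∑ i ∈ g.support, C (algebraMap F K (g.coeff i)) * X ^ q ^ i

lemma qAssoc_eq_eval (g : Polynomial F) (α : K) : qAssoc F g α = (qP F g).eval α := by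
  rw [qAssoc, qP, eval_finset_sum]
  exact Finset.sum_congr rfl fun i _ => by rw [eval_mul, eval_C, eval_pow, eval_X]

lemma coeff_qP_qpow_natDegree (g : Polynomial F) :
    (qP F g).coeff (q ^ g.natDegree) = algebraMap F K (g.coeff g.natDegree) := by
  classical
  rw [qP, finset_sum_coeff]
  have hinj : Function.Injective fun x : ℕ => q ^ x :=
    Nat.pow_right_injective Fintype.one_lt_card
  by_cases hg : g = 0
  · simp [hg]
  rw [Finset.sum_eq_single g.natDegree]
  · rw [coeff_C_mul, coeff_X_pow, if_pos rfl, mul_one]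
  · intro i _ hne
    rw [coeff_C_mul, coeff_X_pow, if_neg (fun h => hne (hinj h.symm)), mul_zero]
  · intro h
    exact absurd (natDegree_mem_support_of_nonzero hg) h

lemma natDegree_qP_le (g : Polynomial F) : (qP F g).natDegree ≤ q ^ g.natDegree := by
  rw [qP]
  refine natDegree_sum_le_of_forall_le _ _ fun i hi => ?_
  refine le_trans (natDegree_C_mul_le _ _) ?_
  rw [natDegree_X_pow]
  exact Nat.pow_le_pow_right Fintype.card_pos (le_natDegree_of_mem_supp i hi)

lemma natDegree_qP {g : Polynomial F} (hg : g ≠ 0) :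
    (qP F g).natDegree = q ^ g.natDegree := by
  refine natDegree_eq_of_le_of_coeff_ne_zero (natDegree_qP_le g) ?_
  rw [coeff_qP_qpow_natDegree]
  exact (map_ne_zero_iff _ (algebraMap F K).injective).mpr
    (mt leadingCoeff_eq_zero.mp hg)

lemma qP_ne_zero {g : Polynomial F} (hg : g ≠ 0) : qP F g ≠ 0 := fun h => by
  have := coeff_qP_qpow_natDegree (F := F) g
  rw [h, coeff_zero] at this
  exact (map_ne_zero_iff _ (algebraMap F K).injective).mpr
    (mt leadingCoeff_eq_zero.mp hg) this.symm

lemma derivative_qP (g : Polynomial F) :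
    derivative (qP F g) = C (algebraMap F K (g.coeff 0)) := by
  classical
  haveI : CharP F (ringChar F) := ringChar.charP F
  obtain ⟨n, hn, hcard⟩ := FiniteField.card F (ringChar F)
  haveI : CharP K (ringChar F) :=
    charP_of_injective_algebraMap (algebraMap F K).injective (ringChar F)
  rw [qP, map_sum]
  have hterm : ∀ i ∈ g.support, derivative (C (algebraMap F K (g.coeff i)) * X ^ q ^ i)
      = if i = 0 then C (algebraMap F K (g.coeff 0)) else 0 := by
    intro i _
    rw [derivative_C_mul, derivative_X_pow]
    rcases Nat.eq_zero_or_pos i with rfl | hi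
    · simp
    · rw [if_neg hi.ne']
      have : ((q ^ i : ℕ) : K) = 0 := by
        rw [CharP.cast_eq_zero_iff K (ringChar F)]
        exact dvd_pow (hcard ▸ dvd_pow_self (ringChar F) n.pos.ne') hi.ne'
      simp [this]
  rw [Finset.sum_congr rfl hterm,
    Finset.sum_ite_eq' g.support 0 (fun _ => C (algebraMap F K (g.coeff 0)))]
  by_cases h0 : (0 : ℕ) ∈ g.support
  · rw [if_pos h0]
  · rw [if_neg h0, notMem_support_iff.mp h0, map_zero, C_0]

lemma separable_qP {g : Polynomial F} (hg : g.coeff 0 ≠ 0) : (qP F g).Separable := by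
  rw [Polynomial.Separable, derivative_qP]
  have h : algebraMap F K (g.coeff 0) ≠ 0 :=
    (map_ne_zero_iff _ (algebraMap F K).injective).mpr hg
  exact ⟨0, C (algebraMap F K (g.coeff 0))⁻¹, by
    rw [zero_mul, zero_add, ← C_mul, inv_mul_cancel₀ h, C_1]⟩

lemma W_coe_eq_rootSet {g : Polynomial F} (hg : g ≠ 0) :
    (W F g : Set K) = (qP F g).rootSet K := by
  ext z
  rw [SetLike.mem_coe, mem_W, mem_rootSet, qAssoc_eq_eval]
  have haev : (aeval z) (qP F g) = eval z (qP F g) := by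
    simp [aeval_def, eval₂_eq_eval_map]
  rw [haev]
  exact ⟨fun h => ⟨qP_ne_zero hg, h⟩, fun h => h.2⟩

lemma finite_W {g : Polynomial F} (hg : g ≠ 0) : Finite (W F g) := by
  have : Finite ((qP F g).rootSet K) := Set.Finite.to_subtype (Set.toFinite _)
  rw [← W_coe_eq_rootSet hg] at this
  exact this

lemma finiteDimensional_W {g : Polynomial F} (hg : g ≠ 0) :
    FiniteDimensional F (W F g) := by
  haveI := finite_W hg
  exact Module.Finite.of_finite

lemma card_W {g : Polynomial F} (hg : g.coeff 0 ≠ 0) :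
    Nat.card (W F g) = q ^ g.natDegree := by
  classical
  have hg0 : g ≠ 0 := fun h => hg (by simp [h])
  have hsep := separable_qP (F := F) hg
  have hsplit : Splits ((qP F g).map (algebraMap K K)) := IsAlgClosed.splits _
  have hcard := card_rootSet_eq_natDegree hsep hsplit
  rw [natDegree_qP hg0] at hcard
  rw [← hcard, ← Nat.card_eq_fintype_card]
  exact Nat.card_congr (Equiv.setCongr (W_coe_eq_rootSet hg0))

lemma finrank_W {g : Polynomial F} (hg : g.coeff 0 ≠ 0) :
    Module.finrank F (W F g) = g.natDegree := by
  classical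
  have hg0 : g ≠ 0 := fun h => hg (by simp [h])
  haveI := finite_W (F := F) hg0
  haveI : Fintype (W F g) := Fintype.ofFinite _
  have h1 : Fintype.card (W F g) = q ^ Module.finrank F (W F g) := Module.card_eq_pow_finrank
  have h2 : Fintype.card (W F g) = q ^ g.natDegree := by
    rw [← Nat.card_eq_fintype_card, card_W hg]
  have h3 : q ^ Module.finrank F ↥(W F g) = q ^ g.natDegree := by rw [← h1, h2]
  exact Nat.pow_right_injective Fintype.one_lt_card h3

lemma natDegree_eq_of_assoc {u v : Polynomial F} (h : Associated u v) (hu : u ≠ 0) :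
    u.natDegree = v.natDegree := by
  have hv : v ≠ 0 := (h.ne_zero_iff).mp hu
  exact le_antisymm (natDegree_le_of_dvd h.dvd hv) (natDegree_le_of_dvd h.symm.dvd hu)

lemma eval0_ne_of_dvd {u v : Polynomial F} (h : u ∣ v) (hv : v.eval 0 ≠ 0) :
    u.eval 0 ≠ 0 := by
  obtain ⟨w, rfl⟩ := h
  intro h0
  exact hv (by rw [eval_mul, h0, zero_mul])

lemma ne_zero_of_eval0 {u : Polynomial F} (hu : u.eval 0 ≠ 0) : u ≠ 0 :=
  fun h => hu (by simp [h])

lemma W_sup_lcm {u v : Polynomial F} (hu : u.eval 0 ≠ 0) (hv : v.eval 0 ≠ 0) :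
    W F u ⊔ W F v = W F (lcm u v) := by
  have hu0 : u ≠ 0 := ne_zero_of_eval0 hu
  have hv0 : v ≠ 0 := ne_zero_of_eval0 hv
  have hgcd0 : gcd u v ≠ 0 := fun h => hu0 ((gcd_eq_zero_iff u v).mp h).1
  have hlcm0 : lcm u v ≠ 0 := fun h => ((lcm_eq_zero_iff u v).mp h).elim hu0 hv0
  have hlcm_dvd : lcm u v ∣ u * v := lcm_dvd (dvd_mul_right u v) (dvd_mul_left v u)
  have hevlcm : (lcm u v).eval 0 ≠ 0 :=
    eval0_ne_of_dvd hlcm_dvd (by rw [eval_mul]; exact mul_ne_zero hu hv)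
  have hevgcd : (gcd u v).eval 0 ≠ 0 := eval0_ne_of_dvd (gcd_dvd_left u v) hu
  have hdeg : (gcd u v).natDegree + (lcm u v).natDegree = u.natDegree + v.natDegree := by
    have h1 := natDegree_eq_of_assoc (gcd_mul_lcm u v) (mul_ne_zero hgcd0 hlcm0)
    rwa [natDegree_mul hgcd0 hlcm0, natDegree_mul hu0 hv0] at h1
  haveI := finiteDimensional_W hu0
  haveI := finiteDimensional_W hv0
  haveI := finiteDimensional_W hlcm0
  have hle : W F u ⊔ W F v ≤ W F (lcm u v) :=
    sup_le (W_dvd (dvd_lcm_left u v)) (W_dvd (dvd_lcm_right u v))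
  refine Submodule.eq_of_le_of_finrank_le hle ?_
  have hsum := Submodule.finrank_sup_add_finrank_inf_eq (W F u) (W F v)
  rw [← W_gcd] at hsum
  rw [finrank_W (by rwa [coeff_zero_eq_eval_zero]),
    finrank_W (by rwa [coeff_zero_eq_eval_zero]),
    finrank_W (by rwa [coeff_zero_eq_eval_zero])] at hsum
  rw [finrank_W (by rwa [coeff_zero_eq_eval_zero])]
  omega

lemma eval0_finset_lcm {ι : Type*} (s : Finset ι) (h : ι → Polynomial F)
    (hh : ∀ i ∈ s, (h i).eval 0 ≠ 0) : (s.lcm h).eval 0 ≠ 0 := by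
  have hdvd : s.lcm h ∣ ∏ i ∈ s, h i := Finset.lcm_dvd fun b hb => Finset.dvd_prod_of_mem h hb
  refine eval0_ne_of_dvd hdvd ?_
  rw [eval_prod]
  exact Finset.prod_ne_zero_iff.mpr hh

lemma W_finset_lcm {ι : Type*} [DecidableEq ι] (s : Finset ι) (h : ι → Polynomial F)
    (hh : ∀ i ∈ s, (h i).eval 0 ≠ 0) :
    W F (s.lcm h) = ⨆ i ∈ s, W F (h i) := by
  induction s using Finset.induction_on with
  | empty => simp [Finset.lcm_empty, W_one]
  | @insert a s ha ih =>
      rw [Finset.lcm_insert, Finset.iSup_insert,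
        ← W_sup_lcm (hh a (Finset.mem_insert_self a s))
          (eval0_finset_lcm s h fun i hi => hh i (Finset.mem_insert_of_mem hi)),
        ih fun i hi => hh i (Finset.mem_insert_of_mem hi)]

lemma qAssoc_neg_left (u : Polynomial F) (α : K) :
    qAssoc F (-u) α = - qAssoc F u α := by
  rw [neg_eq_neg_one_mul, ← C_1, ← C_neg, qAssoc_C_mul, map_neg, map_one, neg_one_mul]

lemma qAssoc_sub_left (u v : Polynomial F) (α : K) :
    qAssoc F (u - v) α = qAssoc F u α - qAssoc F v α := by
  rw [sub_eq_add_neg, qAssoc_add_left, qAssoc_neg_left, sub_eq_add_neg]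

lemma qAssoc_X_pow_sub_one (dd : ℕ) (w : K) :
    qAssoc F ((X : Polynomial F) ^ dd - 1) w = w ^ q ^ dd - w := by
  rw [qAssoc_sub_left, qAssoc_one, X_pow_eq_monomial, qAssoc_monomial, map_one, one_mul]

lemma range_comp_subtype (f D : Polynomial F) (hf : f ≠ 0) (hD : D.eval 0 ≠ 0) :
    LinearMap.range ((Lmap F f).comp (W F D).subtype) = W F (D / gcd f D) := by
  classical
  set g := gcd f D with hg
  have hD0 : D ≠ 0 := ne_zero_of_eval0 hD
  have hg0 : g ≠ 0 := fun h => hf ((gcd_eq_zero_iff f D).mp h).1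
  have hgD : g ∣ D := gcd_dvd_right f D
  have hgh : g * (D / g) = D := EuclideanDomain.mul_div_cancel' hg0 hgD
  set h := D / g with hh
  have hh0 : h ≠ 0 := by
    intro h0
    rw [h0, mul_zero] at hgh
    exact hD0 hgh.symm
  have hhD : h ∣ D := ⟨g, by rw [mul_comm]; exact hgh.symm⟩
  have hevh : h.eval 0 ≠ 0 := eval0_ne_of_dvd hhD hD
  have hevg : g.eval 0 ≠ 0 := eval0_ne_of_dvd hgD hD
  haveI := finiteDimensional_W hD0
  haveI := finiteDimensional_W hf
  haveI := finiteDimensional_W hh0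
  -- range is contained in W h
  have hle : LinearMap.range ((Lmap F f).comp (W F D).subtype) ≤ W F h := by
    rintro x ⟨⟨z, hz⟩, rfl⟩
    obtain ⟨w, hw⟩ : g ∣ f := gcd_dvd_left f D
    have hz' : qAssoc F D z = 0 := hz
    simp only [LinearMap.comp_apply, Submodule.subtype_apply]
    rw [mem_W]
    show qAssoc F h (qAssoc F f z) = 0
    rw [← qAssoc_mul]
    have hDf : h * f = w * D := by
      rw [hw, ← hgh]; ring
    rw [hDf, qAssoc_mul, hz', qAssoc_zero_right]
  -- compute ranks
  have hker : LinearMap.ker ((Lmap F f).comp (W F D).subtype)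
      = Submodule.comap (W F D).subtype (W F f ⊓ W F D) := by
    rw [LinearMap.ker_comp]
    ext x
    simp only [Submodule.mem_comap, Submodule.mem_inf, Submodule.subtype_apply]
    exact ⟨fun hx => ⟨hx, x.2⟩, fun hx => hx.1⟩
  have hkerrank : Module.finrank F (LinearMap.ker ((Lmap F f).comp (W F D).subtype))
      = g.natDegree := by
    rw [hker]
    rw [(Submodule.comapSubtypeEquivOfLe inf_le_right).finrank_eq]
    rw [← W_gcd, finrank_W (by rwa [coeff_zero_eq_eval_zero])]
  have hrn := LinearMap.finrank_range_add_finrank_ker ((Lmap F f).comp (W F D).subtype)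
  rw [hkerrank, finrank_W (by rwa [coeff_zero_eq_eval_zero])] at hrn
  have hdegs : g.natDegree + h.natDegree = D.natDegree := by
    rw [← hgh, natDegree_mul hg0 hh0]
  refine Submodule.eq_of_le_of_finrank_le hle ?_
  rw [finrank_W (by rwa [coeff_zero_eq_eval_zero])]
  omega

lemma range_sum_comp {k : ℕ} (φ : Fin k → (K →ₗ[F] K)) (S : Fin k → Submodule F K) :
    LinearMap.range (∑ i, ((φ i).comp (S i).subtype).comp
        (LinearMap.proj (R := F) (φ := fun j => ↥(S j)) i))
      = ⨆ i, LinearMap.range ((φ i).comp (S i).subtype) := by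
  classical
  apply le_antisymm
  · rintro x ⟨v, rfl⟩
    rw [LinearMap.sum_apply]
    refine Submodule.sum_mem _ fun i _ => ?_
    refine Submodule.mem_iSup_of_mem i ⟨v i, rfl⟩
  · refine iSup_le fun i => ?_
    rintro x ⟨w, rfl⟩
    refine ⟨Pi.single i w, ?_⟩
    rw [LinearMap.sum_apply]
    rw [Finset.sum_eq_single_of_mem i (Finset.mem_univ i)]
    · simp
    · intro j _ hj
      simp [Pi.single_eq_of_ne hj]

end LEC

open LEC

/-- **Theorem 1 (counting part).** For nonzero `f₁, …, f_k ∈ F_q[x]`, positive integers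
`d₁, …, d_k`, `b` in the algebraic closure of `F_q`, and `ℓ` divisible by each `dᵢ`, with
`G_ℓ = gcd(x^ℓ - 1, f₁(x)(x^ℓ-1)/(x^{d₁}-1), …)` and `H_ℓ = (x^ℓ-1)/G_ℓ`: if `L_{H_ℓ}(b) = 0`,
then the number of solutions of `L_{f₁}(x₁) + ⋯ + L_{f_k}(x_k) = b` with `zᵢ ∈ F_{q^{dᵢ}}`
equals `q^(d₁ + ⋯ + d_k - deg H_ℓ)`. -/
theorem linear_equation_count
    (F : Type*) [Field F] [Fintype F] [DecidableEq F]
    (q : ℕ) (hq : q = Fintype.card F)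
    {k : ℕ} (f : Fin k → Polynomial F) (hf : ∀ i, f i ≠ 0)
    (d : Fin k → ℕ) (hd : ∀ i, 0 < d i)
    (b : AlgebraicClosure F)
    (ℓ : ℕ) (hℓ : 0 < ℓ) (hdvd : ∀ i, d i ∣ ℓ)
    (G H : Polynomial F)
    (hG : G = gcd ((X : Polynomial F) ^ ℓ - 1)
      (Finset.univ.gcd fun i => f i * ((X : Polynomial F) ^ ℓ - 1) / ((X : Polynomial F) ^ (d i) - 1)))
    (hH : H = ((X : Polynomial F) ^ ℓ - 1) / G)
    (hb : qAssoc F H b = 0) :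
    (Nat.card {z : Fin k → AlgebraicClosure F //
        (∀ i, z i ^ q ^ (d i) = z i) ∧ ∑ i, qAssoc F (f i) (z i) = b} : ℚ) =
      (q : ℚ) ^ ((∑ i, (d i : ℤ)) - (H.natDegree : ℤ)) := by
  classical
  subst hq
  set N : Polynomial F := (X : Polynomial F) ^ ℓ - 1 with hN
  set M : Polynomial F :=
    Finset.univ.gcd (fun i => f i * N / ((X : Polynomial F) ^ (d i) - 1)) with hM
  -- basic facts about N and the D i
  have hNeval : N.eval 0 ≠ 0 := by simp [hN, zero_pow hℓ.ne']
  have hN0 : N ≠ 0 := ne_zero_of_eval0 hNeval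
  have hDeval : ∀ i, ((X : Polynomial F) ^ (d i) - 1).eval 0 ≠ 0 := fun i => by
    simp [zero_pow (hd i).ne']
  have hD0 : ∀ i, ((X : Polynomial F) ^ (d i) - 1) ≠ 0 := fun i => ne_zero_of_eval0 (hDeval i)
  have hDdeg : ∀ i, ((X : Polynomial F) ^ (d i) - 1).natDegree = d i := fun i => by
    simpa using natDegree_X_pow_sub_C (n := d i) (r := (1 : F))
  have hDdvdN : ∀ i, ((X : Polynomial F) ^ (d i) - 1) ∣ N := by
    intro i
    have h1 : (X : Polynomial F) ^ (d i) - 1 ∣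
        ((X : Polynomial F) ^ (d i)) ^ (ℓ / d i) - 1 ^ (ℓ / d i) :=
      sub_dvd_pow_sub_pow _ _ _
    rwa [← pow_mul, Nat.mul_div_cancel' (hdvd i), one_pow] at h1
  set E : Fin k → Polynomial F := fun i => N / ((X : Polynomial F) ^ (d i) - 1) with hE
  have hDE : ∀ i, ((X : Polynomial F) ^ (d i) - 1) * E i = N := fun i =>
    EuclideanDomain.mul_div_cancel' (hD0 i) (hDdvdN i)
  have hfE : ∀ i, f i * N / ((X : Polynomial F) ^ (d i) - 1) = f i * E i := fun i =>
    EuclideanDomain.mul_div_assoc _ (hDdvdN i)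
  set g : Fin k → Polynomial F := fun i => gcd (f i) ((X : Polynomial F) ^ (d i) - 1) with hg
  have hg0 : ∀ i, g i ≠ 0 := fun i h0 => (hf i) ((gcd_eq_zero_iff _ _).mp h0).1
  set h : Fin k → Polynomial F :=
    fun i => ((X : Polynomial F) ^ (d i) - 1) / g i with hh
  have hgh : ∀ i, g i * h i = (X : Polynomial F) ^ (d i) - 1 := fun i =>
    EuclideanDomain.mul_div_cancel' (hg0 i) (gcd_dvd_right _ _)
  have hhD : ∀ i, h i ∣ (X : Polynomial F) ^ (d i) - 1 := fun i =>
    ⟨g i, by rw [mul_comm]; exact (hgh i).symm⟩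
  have hevh : ∀ i, (h i).eval 0 ≠ 0 := fun i => eval0_ne_of_dvd (hhD i) (hDeval i)
  -- facts about G and H
  have hGNM : G = gcd N M := hG
  have hGN : G ∣ N := by rw [hGNM]; exact gcd_dvd_left _ _
  have hGM : G ∣ M := by rw [hGNM]; exact gcd_dvd_right _ _
  have hG0 : G ≠ 0 := by
    rw [hGNM]
    exact fun h0 => hN0 ((gcd_eq_zero_iff _ _).mp h0).1
  have hGH : G * H = N := by rw [hH]; exact EuclideanDomain.mul_div_cancel' hG0 hGN
  have hH0 : H ≠ 0 := fun h0 => hN0 (by rw [← hGH, h0, mul_zero])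
  -- Claim A : h i ∣ H
  have claimA : ∀ i, h i ∣ H := by
    intro i
    have e1 : G ∣ f i * E i := by
      have t : M ∣ f i * N / ((X : Polynomial F) ^ (d i) - 1) :=
        Finset.gcd_dvd (Finset.mem_univ i)
      rw [hfE i] at t
      exact hGM.trans t
    have e2 : G ∣ ((X : Polynomial F) ^ (d i) - 1) * E i := by rw [hDE i]; exact hGN
    have e3 : G ∣ gcd (f i * E i) (((X : Polynomial F) ^ (d i) - 1) * E i) := dvd_gcd e1 e2
    rw [gcd_mul_right] at e3
    have e4 : G ∣ g i * E i := e3.trans (mul_dvd_mul_left _ (associated_normalize (E i)).symm.dvd)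
    have e5 : h i * G ∣ H * G := by
      rw [mul_comm H G, hGH]
      calc h i * G ∣ h i * (g i * E i) := mul_dvd_mul_left _ e4
        _ = N := by rw [← mul_assoc, mul_comm (h i) (g i), hgh i, hDE i]
    exact (mul_dvd_mul_iff_right hG0).mp e5
  set L : Polynomial F := Finset.univ.lcm h with hL
  -- Claim B : H ∣ L
  have claimB : H ∣ L := by
    have hNfEL : ∀ i, N ∣ (f i * N / ((X : Polynomial F) ^ (d i) - 1)) * L := by
      intro i
      rw [hfE i]
      have t : (g i * h i) * E i ∣ (f i * L) * E i :=
        mul_dvd_mul (mul_dvd_mul (gcd_dvd_left _ _) (Finset.dvd_lcm (Finset.mem_univ i))) dvd_rfl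
      calc N = (g i * h i) * E i := by rw [hgh i, hDE i]
        _ ∣ (f i * L) * E i := t
        _ = (f i * E i) * L := by ring
    have hNML : N ∣ M * normalize L := by
      rw [hM, ← Finset.gcd_mul_right]
      exact Finset.dvd_gcd fun i _ => hNfEL i
    have hNML' : N ∣ M * L := hNML.trans (mul_dvd_mul_left _ (associated_normalize L).symm.dvd)
    have hNGL : N ∣ G * normalize L := by
      rw [hGNM, ← gcd_mul_right]
      exact dvd_gcd (dvd_mul_right N L) hNML'
    have hNGL' : N ∣ G * L := hNGL.trans (mul_dvd_mul_left _ (associated_normalize L).symm.dvd)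
    have e6 : H * G ∣ L * G := by
      rw [mul_comm H G, hGH, mul_comm L G]
      exact hNGL'
    exact (mul_dvd_mul_iff_right hG0).mp e6
  have hHL : Associated H L := associated_of_dvd_dvd claimB (Finset.lcm_dvd fun i _ => claimA i)
  have hWHL : W F H = W F L := W_eq_of_associated hHL
  have hdegHL : H.natDegree = L.natDegree := natDegree_eq_of_assoc hHL hH0
  have hevL : L.eval 0 ≠ 0 := by
    rw [hL]
    exact eval0_finset_lcm _ _ fun i _ => hevh i
  -- the linear map
  set S : Fin k → Submodule F (AlgebraicClosure F) := fun i => W F ((X : Polynomial F) ^ (d i) - 1) with hS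
  haveI instFD : ∀ i, FiniteDimensional F ↥(S i) := fun i => finiteDimensional_W (hD0 i)
  haveI instFin : ∀ i, Finite ↥(S i) := fun i => finite_W (hD0 i)
  set T : ((i : Fin k) → ↥(S i)) →ₗ[F] AlgebraicClosure F :=
    ∑ i, ((Lmap F (f i)).comp ((S i).subtype)).comp
      (LinearMap.proj (R := F) (φ := fun j => ↥(S j)) i) with hT
  have hrange : LinearMap.range T = W F H := by
    rw [hT, range_sum_comp]
    have hri : ∀ i, LinearMap.range ((Lmap F (f i)).comp ((S i).subtype)) = W F (h i) :=
      fun i => range_comp_subtype (f i) _ (hf i) (hDeval i)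
    rw [iSup_congr hri, hWHL, hL, W_finset_lcm Finset.univ h fun i _ => hevh i]
    simp
  -- b is in the range
  have hbmem : b ∈ LinearMap.range T := by
    rw [hrange]
    exact LEC.mem_W.mpr hb
  obtain ⟨v₀, hv₀⟩ := hbmem
  -- the two equivalences
  have hmemS : ∀ (i : Fin k) (w : AlgebraicClosure F), w ∈ S i ↔ w ^ (Fintype.card F) ^ (d i) = w := by
    intro i w
    rw [hS]
    rw [show w ∈ W F ((X : Polynomial F) ^ (d i) - 1) ↔
      qAssoc F ((X : Polynomial F) ^ (d i) - 1) w = 0 from Iff.rfl]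
    rw [qAssoc_X_pow_sub_one, sub_eq_zero]
  have hTapp : ∀ v : (i : Fin k) → ↥(S i), T v = ∑ i, qAssoc F (f i) ↑(v i) := by
    intro v
    rw [hT, LinearMap.sum_apply]
    exact Finset.sum_congr rfl fun i _ => rfl
  have e1 : {z : Fin k → AlgebraicClosure F // (∀ i, z i ^ (Fintype.card F) ^ (d i) = z i) ∧
      ∑ i, qAssoc F (f i) (z i) = b} ≃ {v : (i : Fin k) → ↥(S i) // T v = b} :=
    { toFun := fun z => ⟨fun i => ⟨z.1 i, (hmemS i _).mpr (z.2.1 i)⟩,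
        by rw [hTapp]; exact z.2.2⟩
      invFun := fun v => ⟨fun i => ↑(v.1 i),
        ⟨fun i => (hmemS i _).mp (v.1 i).2, by rw [← hTapp]; exact v.2⟩⟩
      left_inv := fun z => Subtype.ext rfl
      right_inv := fun v => Subtype.ext (funext fun i => Subtype.ext rfl) }
  have e2 : {v : (i : Fin k) → ↥(S i) // T v = b} ≃ ↥(LinearMap.ker T) :=
    { toFun := fun v => ⟨v.1 - v₀, by
        rw [LinearMap.mem_ker, map_sub, v.2, hv₀, sub_self]⟩
      invFun := fun w => ⟨w.1 + v₀, by
        have hw : T w.1 = 0 := w.2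
        rw [map_add, hw, hv₀, zero_add]⟩
      left_inv := fun v => Subtype.ext (by simp)
      right_inv := fun w => Subtype.ext (by simp) }
  -- rank computations
  have hfinV : Module.finrank F ((i : Fin k) → ↥(S i)) = ∑ i, d i := by
    rw [Module.finrank_pi_fintype]
    refine Finset.sum_congr rfl fun i _ => ?_
    rw [hS]
    rw [finrank_W (by rw [coeff_zero_eq_eval_zero]; exact hDeval i), hDdeg i]
  have hrn := LinearMap.finrank_range_add_finrank_ker T
  have hrangerank : Module.finrank F ↥(LinearMap.range T) = H.natDegree := by
    rw [hrange, hWHL, finrank_W (by rw [coeff_zero_eq_eval_zero]; exact hevL), hdegHL]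
  rw [hfinV, hrangerank] at hrn
  -- cardinality
  haveI : Finite ((i : Fin k) → ↥(S i)) := Pi.finite
  haveI : Finite ↥(LinearMap.ker T) := Subtype.finite
  haveI : Fintype ↥(LinearMap.ker T) := Fintype.ofFinite _
  have hcards : Nat.card {z : Fin k → AlgebraicClosure F // (∀ i, z i ^ (Fintype.card F) ^ (d i) = z i) ∧
      ∑ i, qAssoc F (f i) (z i) = b}
      = Fintype.card F ^ Module.finrank F ↥(LinearMap.ker T) := by
    rw [Nat.card_congr (e1.trans e2), Nat.card_eq_fintype_card]
    exact Module.card_eq_pow_finrank (K := F) (V := ↥(LinearMap.ker T))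
  rw [hcards]
  have hexp : (∑ i, (d i : ℤ)) - (H.natDegree : ℤ)
      = (Module.finrank F ↥(LinearMap.ker T) : ℤ) := by
    rw [← Nat.cast_sum, ← hrn]
    push_cast
    ring
  rw [hexp, zpow_natCast]
  push_cast
  ring
end

section
/- Let q be a prime power, let β be an element of the algebraic closure of F_q, let g ∈ F_q[x], and set α = L_g(β). Then m_{α,q} = m_{β,q} / gcd(m_{β,q}, g). -/
open Polynomial

section Aux

variable (F : Type*) [Field F] [Fintype F]

private lemma qAssoc_eq_sum (f : Polynomial F) (β : AlgebraicClosure F) :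
    qAssoc F f β
      = f.sum fun i a => algebraMap F (AlgebraicClosure F) a * β ^ (Fintype.card F) ^ i := rfl

private lemma qAssoc_add (f g : Polynomial F) (β : AlgebraicClosure F) :
    qAssoc F (f + g) β = qAssoc F f β + qAssoc F g β := by
  simp only [qAssoc_eq_sum]
  exact Polynomial.sum_add_index f g _ (fun i => by simp) (fun i a b => by rw [map_add, add_mul])

private lemma qAssoc_monomial (i : ℕ) (a : F) (β : AlgebraicClosure F) :
    qAssoc F (monomial i a) β
      = algebraMap F (AlgebraicClosure F) a * β ^ (Fintype.card F) ^ i := by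
  rw [qAssoc_eq_sum, Polynomial.sum_monomial_index a _ (by simp)]

private lemma qAssoc_mul (g h : Polynomial F) (β : AlgebraicClosure F) :
    qAssoc F (h * g) β = qAssoc F h (qAssoc F g β) := by
  classical
  obtain ⟨p, hp⟩ := CharP.exists F
  haveI := hp
  haveI fp : Fact p.Prime := ⟨CharP.char_is_prime F p⟩
  obtain ⟨n, -, hq⟩ := FiniteField.card F p
  haveI : CharP (AlgebraicClosure F) p :=
    charP_of_injective_algebraMap (algebraMap F (AlgebraicClosure F)).injective p
  -- binary Frobenius additivity for q-th powers
  have hadd : ∀ (x y : AlgebraicClosure F) (i : ℕ),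
      (x + y) ^ (Fintype.card F) ^ i = x ^ (Fintype.card F) ^ i + y ^ (Fintype.card F) ^ i := by
    intro x y i
    rw [hq, ← pow_mul]
    exact add_pow_char_pow ..
  have habc : ∀ (c : F) (i : ℕ),
      (algebraMap F (AlgebraicClosure F) c) ^ (Fintype.card F) ^ i
        = algebraMap F (AlgebraicClosure F) c := by
    intro c i
    rw [← map_pow, FiniteField.pow_card_pow]
  have key : ∀ (i : ℕ) (a : F) (g : Polynomial F),
      qAssoc F (monomial i a * g) β
        = algebraMap F (AlgebraicClosure F) a * (qAssoc F g β) ^ (Fintype.card F) ^ i := by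
    intro i a g
    induction g using Polynomial.induction_on' with
    | add g₁ g₂ ih1 ih2 =>
      rw [mul_add, qAssoc_add, ih1, ih2, qAssoc_add, hadd, mul_add]
    | monomial k b =>
      rw [Polynomial.monomial_mul_monomial, qAssoc_monomial, qAssoc_monomial, map_mul, mul_pow,
        habc, ← pow_mul, ← pow_add, mul_assoc, add_comm k i]
  induction h using Polynomial.induction_on' with
  | add h₁ h₂ ih1 ih2 => rw [add_mul, qAssoc_add, ih1, ih2, qAssoc_add]
  | monomial i a => rw [key, qAssoc_monomial]

end Aux

/-- **Lemma 6.** Let `β` be in the algebraic closure of `F_q`, `g ∈ F_q[x]` and `α = L_g(β)`.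
Then `m_{α,q} = m_{β,q} / gcd(m_{β,q}, g)`, where `m_{γ,q}` denotes the monic generator of the
ideal `{h ∈ F_q[x] : L_h(γ) = 0}`. -/
theorem annihilator_of_image
    (F : Type*) [Field F] [Fintype F] [DecidableEq F]
    (β : AlgebraicClosure F) (g : Polynomial F)
    (α : AlgebraicClosure F) (hα : α = qAssoc F g β)
    (mβ : Polynomial F) (hmβ : mβ.Monic)
    (hgenβ : ∀ h : Polynomial F, qAssoc F h β = 0 ↔ mβ ∣ h)
    (mα : Polynomial F) (hmα : mα.Monic)
    (hgenα : ∀ h : Polynomial F, qAssoc F h α = 0 ↔ mα ∣ h) :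
    mα = mβ / gcd mβ g := by
  set d := gcd mβ g with hd
  have hmβ0 : mβ ≠ 0 := hmβ.ne_zero
  have hd0 : d ≠ 0 := gcd_ne_zero_of_left hmβ0
  have hdvd : d ∣ mβ := gcd_dvd_left mβ g
  set m' := mβ / d with hm'
  have hm'd : d * m' = mβ := EuclideanDomain.mul_div_cancel' hd0 hdvd
  -- the crucial divisibility equivalence
  have hiff : ∀ h : Polynomial F, mβ ∣ h * g ↔ m' ∣ h := by
    intro h
    rcases eq_or_ne g 0 with rfl | hg
    · have hdm : d = mβ := by rw [hd, gcd_zero_right, Polynomial.Monic.normalize_eq_self hmβ]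
      have hm1 : m' = 1 := by
        rw [hm', hdm, EuclideanDomain.div_self hmβ0]
      simp [hm1]
    · have hcop : IsCoprime m' (g / d) := isCoprime_div_gcd_div_gcd hg
      have hg' : d * (g / d) = g := EuclideanDomain.mul_div_cancel' hd0 (gcd_dvd_right mβ g)
      constructor
      · rintro ⟨c, hc⟩
        have hcancel : d * (h * (g / d)) = d * (m' * c) := by
          calc d * (h * (g / d)) = h * (d * (g / d)) := by ring
            _ = h * g := by rw [hg']
            _ = mβ * c := hc
            _ = d * (m' * c) := by rw [← hm'd]; ring
        exact hcop.dvd_of_dvd_mul_right ⟨c, mul_left_cancel₀ hd0 hcancel⟩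
      · rintro ⟨c, hc⟩
        refine ⟨c * (g / d), ?_⟩
        calc h * g = m' * c * (d * (g / d)) := by rw [hc, hg']
          _ = d * m' * (c * (g / d)) := by ring
          _ = mβ * (c * (g / d)) := by rw [hm'd]
  have keydvd : ∀ h : Polynomial F, mα ∣ h ↔ m' ∣ h := by
    intro h
    rw [← hgenα, hα, ← qAssoc_mul, hgenβ, hiff]
  have h1 : mα ∣ m' := (keydvd m').mpr dvd_rfl
  have h2 : m' ∣ mα := (keydvd mα).mp dvd_rfl
  have hdm : d.Monic := by
    have := Polynomial.monic_normalize (p := d) hd0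
    rwa [hd, normalize_gcd] at this
  have hm'monic : m'.Monic := hdm.of_mul_monic_left (by rwa [hm'd])
  exact Polynomial.eq_of_monic_of_associated hmα hm'monic (associated_of_dvd_dvd h1 h2)
end

section
/- Let q be a prime power, let n be a positive integer, let f ∈ F_q[x] be a divisor of x^n − 1, let α be an element of the algebraic closure of F_q, and let β ∈ F_{q^n} be a normal element over F_q. Then there exists a polynomial g ∈ F_q[x] such that L_{f·g}(β) = α if and only if m_{α,q}(x) divides (x^n − 1)/f(x), equivalently if and only if L_{(x^n−1)/f(x)}(α) = 0. -/
open Polynomial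

/-- `β ∈ F_{q^n}` is a normal element over `F_q` if `β, β^q, …, β^{q^{n-1}}` form an `F_q`-basis
of `F_{q^n}` (the subfield `{x | x^{q^n} = x}` of the algebraic closure). -/
def IsNormalElement (F : Type*) [Field F] [Fintype F] (n : ℕ) (β : AlgebraicClosure F) : Prop :=
  LinearIndependent F (fun i : Fin n => β ^ (Fintype.card F) ^ (i : ℕ)) ∧
    (Submodule.span F (Set.range fun i : Fin n => β ^ (Fintype.card F) ^ (i : ℕ)) :
        Set (AlgebraicClosure F)) =
      {x : AlgebraicClosure F | x ^ (Fintype.card F) ^ n = x}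

noncomputable def frobF (F : Type*) [Field F] [Fintype F] :
    Module.End F (AlgebraicClosure F) where
  toFun x := x ^ Fintype.card F
  map_add' x y := by
    obtain ⟨k, hp, hcard⟩ := FiniteField.card F (ringChar F)
    haveI : Fact (Nat.Prime (ringChar F)) := ⟨hp⟩
    haveI : CharP (AlgebraicClosure F) (ringChar F) :=
      charP_of_injective_algebraMap (algebraMap F (AlgebraicClosure F)).injective (ringChar F)
    rw [hcard]
    exact add_pow_char_pow x y (ringChar F) k
  map_smul' c x := by
    simp only [RingHom.id_apply, Algebra.smul_def, mul_pow, ← map_pow,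
      FiniteField.pow_card]

lemma frobF_pow_apply (F : Type*) [Field F] [Fintype F] (i : ℕ) (γ : AlgebraicClosure F) :
    (frobF F ^ i) γ = γ ^ (Fintype.card F) ^ i := by
  induction i with
  | zero => simp
  | succ i ih =>
    rw [pow_succ', Module.End.mul_apply, ih]
    show (γ ^ Fintype.card F ^ i) ^ Fintype.card F = _
    rw [← pow_mul, ← pow_succ]

lemma qAssoc_eq_s10 (F : Type*) [Field F] [Fintype F] (f : Polynomial F) (γ : AlgebraicClosure F) :
    qAssoc F f γ = Polynomial.aeval (frobF F) f γ := by
  rw [aeval_def, eval₂_eq_sum, Polynomial.sum, LinearMap.sum_apply]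
  refine Finset.sum_congr rfl fun i _ => ?_
  rw [Module.End.mul_apply, frobF_pow_apply, Module.algebraMap_end_apply, Algebra.smul_def]

/-- **Theorem 8.** Let `f ∈ F_q[x]` divide `x^n - 1`, let `α` be in the algebraic closure of
`F_q` and let `β ∈ F_{q^n}` be normal over `F_q`. Then there exists `g ∈ F_q[x]` with
`L_{f·g}(β) = α` if and only if `m_{α,q}` divides `(x^n-1)/f`, equivalently iff
`L_{(x^n-1)/f}(α) = 0`. -/
theorem image_of_multiples_iff
    (F : Type*) [Field F] [Fintype F]
    (q : ℕ) (hq : q = Fintype.card F)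
    (n : ℕ) (hn : 0 < n)
    (f : Polynomial F) (hf : f ∣ (X : Polynomial F) ^ n - 1)
    (α : AlgebraicClosure F)
    (β : AlgebraicClosure F) (hβmem : β ^ q ^ n = β) (hβ : IsNormalElement F n β)
    (mα : Polynomial F) (hmα : mα.Monic)
    (hgenα : ∀ h : Polynomial F, qAssoc F h α = 0 ↔ mα ∣ h) :
    ((∃ g : Polynomial F, qAssoc F (f * g) β = α) ↔
        mα ∣ ((X : Polynomial F) ^ n - 1) / f) ∧
      ((∃ g : Polynomial F, qAssoc F (f * g) β = α) ↔
        qAssoc F (((X : Polynomial F) ^ n - 1) / f) α = 0) := by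
  set φ := frobF F with hφ
  set T : Polynomial F := X ^ n - 1 with hTdef
  set h : Polynomial F := T / f with hhdef
  have hTmonic : T.Monic := by
    have : T = X ^ n - C 1 := by rw [map_one]
    rw [this]
    exact monic_X_pow_sub_C 1 hn.ne'
  have hTne : T ≠ 0 := hTmonic.ne_zero
  have hfne : f ≠ 0 := by rintro rfl; exact hTne (zero_dvd_iff.mp hf)
  have hT : f * h = T := EuclideanDomain.mul_div_cancel' hfne hf
  have hhne : h ≠ 0 := by
    intro hh0; rw [hh0, mul_zero] at hT; exact hTne hT.symm
  have key : ∀ (u v : Polynomial F) (γ : AlgebraicClosure F),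
      Polynomial.aeval φ (u * v) γ = Polynomial.aeval φ u (Polynomial.aeval φ v γ) := by
    intro u v γ
    rw [map_mul, Module.End.mul_apply]
  rw [hq] at hβmem
  have hTβ : Polynomial.aeval φ T β = 0 := by
    rw [hTdef, map_sub, map_pow, map_one, aeval_X, LinearMap.sub_apply,
      frobF_pow_apply, Module.End.one_apply, hβmem, sub_self]
  -- annihilator of β
  have ann : ∀ c : Polynomial F, Polynomial.aeval φ c β = 0 ↔ T ∣ c := by
    intro c
    constructor
    · intro hc
      rw [← (modByMonic_eq_zero_iff_dvd hTmonic)]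
      have hdecomp := modByMonic_add_div c T
      set r := c %ₘ T with hr
      have hrβ : Polynomial.aeval φ r β = 0 := by
        have : Polynomial.aeval φ c β
            = Polynomial.aeval φ r β + Polynomial.aeval φ ((c /ₘ T) * T) β := by
          conv_lhs => rw [← hdecomp]
          rw [map_add, LinearMap.add_apply, mul_comm T (c /ₘ T)]
        rw [hc, key _ T, hTβ, map_zero, add_zero] at this
        exact this.symm
      by_contra hrne
      have hdeg : r.natDegree < n := by
        have hd := degree_modByMonic_lt c hTmonic
        rw [← hr] at hd
        have hdT : T.degree = (n : ℕ) := by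
          rw [hTdef]
          have : (X : Polynomial F) ^ n - 1 = X ^ n - C 1 := by rw [map_one]
          rw [this]
          exact degree_X_pow_sub_C hn 1
        rw [hdT] at hd
        exact natDegree_lt_iff_degree_lt hrne |>.mpr hd
      have hsum : ∑ i : Fin n, r.coeff i • β ^ (Fintype.card F) ^ (i : ℕ) = 0 := by
        have := aeval_eq_sum_range' hdeg φ
        have h2 : Polynomial.aeval φ r β
            = ∑ i ∈ Finset.range n, r.coeff i • β ^ (Fintype.card F) ^ i := by
          rw [this, LinearMap.sum_apply]
          refine Finset.sum_congr rfl fun i _ => ?_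
          rw [LinearMap.smul_apply, frobF_pow_apply]
        rw [← Fin.sum_univ_eq_sum_range (fun i => r.coeff i • β ^ (Fintype.card F) ^ i) n] at h2
        rw [← h2, hrβ]
      have hzero := (Fintype.linearIndependent_iff.mp hβ.1) (fun i => r.coeff i) hsum
      apply hrne
      ext i
      by_cases hi : i < n
      · simpa using hzero ⟨i, hi⟩
      · simp [coeff_eq_zero_of_natDegree_lt (lt_of_lt_of_le hdeg (le_of_not_gt hi))]
    · rintro ⟨t, rfl⟩
      rw [mul_comm, key, hTβ, map_zero]
  have main : (∃ g : Polynomial F, qAssoc F (f * g) β = α) ↔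
      Polynomial.aeval φ h α = 0 := by
    constructor
    · rintro ⟨g, hg⟩
      rw [qAssoc_eq_s10] at hg
      rw [← hg, ← key]
      have hcomm : h * (f * g) = g * T := by rw [← hT]; ring
      rw [hcomm, key, hTβ, map_zero]
    · intro hα0
      have hαmem : α ^ (Fintype.card F) ^ n = α := by
        have hTα : Polynomial.aeval φ T α = 0 := by
          rw [← hT, key, hα0, map_zero]
        rw [hTdef, map_sub, map_pow, map_one, aeval_X, LinearMap.sub_apply,
          frobF_pow_apply, Module.End.one_apply, sub_eq_zero] at hTα
        exact hTα
      have hspan : α ∈ Submodule.span F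
          (Set.range fun i : Fin n => β ^ (Fintype.card F) ^ (i : ℕ)) := by
        have h2 := hβ.2
        rw [Set.ext_iff] at h2
        exact (h2 α).mpr hαmem
      obtain ⟨c, hc⟩ := (Submodule.mem_span_range_iff_exists_fun F).mp hspan
      set a : Polynomial F := ∑ i : Fin n, C (c i) * X ^ (i : ℕ) with ha
      have haβ : Polynomial.aeval φ a β = α := by
        rw [ha, map_sum, LinearMap.sum_apply, ← hc]
        refine Finset.sum_congr rfl fun i _ => ?_
        rw [map_mul, map_pow, aeval_C, aeval_X, Module.End.mul_apply,
          frobF_pow_apply, Module.algebraMap_end_apply]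
      have hdvd : T ∣ h * a := by
        rw [← ann, key, haβ]; exact hα0
      rw [← hT, mul_comm f h] at hdvd
      obtain ⟨g, hg⟩ := (mul_dvd_mul_iff_left hhne).mp hdvd
      exact ⟨g, by rw [qAssoc_eq_s10, ← hg, haβ]⟩
  constructor
  · rw [← hgenα h, qAssoc_eq_s10]
    exact main
  · rw [qAssoc_eq_s10]
    exact main
end
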